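/- arXiv:2302.09726 — 2 statements merged into one kernel-verified Lean document; each statement's English description precedes it below -/
import Mathlib

section
/- Let H and H_k be symmetric positive semidefinite p×p real matrices and ρ > 0. Then the operator norm of (H + ρI)⁻¹ - (H_k + ρI)⁻¹ is at most (1/ρ)·‖E‖/(‖E‖ + ρ), where E = H - H_k and ‖·‖ denotes the operator norm, provided E ≠ 0; if E = 0 the difference is zero. -/
open Matrix
open scoped Matrix.Norms.L2Operator RealInnerProductSpace

namespace ResolventAux

variable {p : ℕ}

/-- smul of a PSD matrix by a nonneg scalar is PSD -/
lemma psd_smul {M : Matrix (Fin p) (Fin p) ℝ} (hM : M.PosSemidef) {c : ℝ} (hc : 0 ≤ c) :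
    (c • M).PosSemidef := by
  refine PosSemidef.of_dotProduct_mulVec_nonneg ?_ fun x => ?_
  · show (c • M)ᴴ = c • M
    rw [conjTranspose_smul, hM.1, star_trivial]
  · rw [smul_mulVec, dotProduct_smul, smul_eq_mul]
    exact mul_nonneg hc (hM.dotProduct_mulVec_nonneg x)

lemma posDef_smul_one {c : ℝ} (hc : 0 < c) :
    (c • (1 : Matrix (Fin p) (Fin p) ℝ)).PosDef := by
  rw [smul_one_eq_diagonal]
  exact posDef_diagonal_iff.mpr fun _ => hc

/-- bridge: inner product on EuclideanSpace vs dotProduct -/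
lemma inner_toE (u v : Fin p → ℝ) :
    ⟪(WithLp.equiv 2 (Fin p → ℝ)).symm u, (WithLp.equiv 2 (Fin p → ℝ)).symm v⟫ = u ⬝ᵥ v := by
  rw [PiLp.inner_apply]
  simp [dotProduct, mul_comm]

lemma dot_self_nonneg (x : Fin p → ℝ) : 0 ≤ x ⬝ᵥ x := by
  simpa [star_trivial] using dotProduct_star_self_nonneg x

/-- Cauchy-Schwarz-type bound via the operator norm. -/
lemma dot_mulVec_le (M : Matrix (Fin p) (Fin p) ℝ) (x : Fin p → ℝ) :
    x ⬝ᵥ M *ᵥ x ≤ ‖M‖ * (x ⬝ᵥ x) := by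
  set x' : EuclideanSpace ℝ (Fin p) := (WithLp.equiv 2 (Fin p → ℝ)).symm x with hx'
  set y' : EuclideanSpace ℝ (Fin p) := (WithLp.equiv 2 (Fin p → ℝ)).symm (M *ᵥ x) with hy'
  have h1 : x ⬝ᵥ M *ᵥ x = ⟪x', y'⟫ := (inner_toE x (M *ᵥ x)).symm
  have h2 : x ⬝ᵥ x = ‖x'‖ * ‖x'‖ := by
    rw [← real_inner_self_eq_norm_mul_norm, inner_toE]
  have h3 : ‖y'‖ ≤ ‖M‖ * ‖x'‖ := by
    have := M.l2_opNorm_mulVec x'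
    simpa [hy', hx'] using this
  calc x ⬝ᵥ M *ᵥ x = ⟪x', y'⟫ := h1
    _ ≤ ‖x'‖ * ‖y'‖ := real_inner_le_norm x' y'
    _ ≤ ‖x'‖ * (‖M‖ * ‖x'‖) := by
        exact mul_le_mul_of_nonneg_left h3 (norm_nonneg _)
    _ = ‖M‖ * (x ⬝ᵥ x) := by rw [h2]; ring

/-- If `‖M‖ ≤ c` and `M` is hermitian then `c • 1 - M` is PSD. -/
lemma psd_smul_one_sub {M : Matrix (Fin p) (Fin p) ℝ} (hM : M.IsHermitian) {c : ℝ}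
    (h : ‖M‖ ≤ c) : (c • (1 : Matrix (Fin p) (Fin p) ℝ) - M).PosSemidef := by
  refine PosSemidef.of_dotProduct_mulVec_nonneg ?_ fun x => ?_
  · show (c • 1 - M)ᴴ = c • 1 - M
    rw [conjTranspose_sub, conjTranspose_smul, conjTranspose_one, hM.eq, star_trivial]
  · rw [star_trivial, sub_mulVec, dotProduct_sub, smul_mulVec, one_mulVec,
      dotProduct_smul, smul_eq_mul]
    have h1 := dot_mulVec_le M x
    have h2 := dot_self_nonneg x
    nlinarith [mul_le_mul_of_nonneg_right h h2]

set_option maxHeartbeats 1000000 in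
/-- Anti-monotonicity of the inverse. -/
lemma inv_antitone {B P : Matrix (Fin p) (Fin p) ℝ} (hB : B.PosDef) (hP : P.PosSemidef) :
    (B⁻¹ - (B + P)⁻¹).PosSemidef := by
  set C := B + P with hCdef
  have hC : C.PosDef := hB.add_posSemidef hP
  have hBdet : IsUnit B.det := (Matrix.isUnit_iff_isUnit_det B).mp hB.isUnit
  have hCdet : IsUnit C.det := (Matrix.isUnit_iff_isUnit_det C).mp hC.isUnit
  have hBB : B⁻¹ * B = 1 := Matrix.nonsing_inv_mul B hBdet
  have hBB' : B * B⁻¹ = 1 := Matrix.mul_nonsing_inv B hBdet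
  have hCC : C * C⁻¹ = 1 := Matrix.mul_nonsing_inv C hCdet
  have hCC' : C⁻¹ * C = 1 := Matrix.nonsing_inv_mul C hCdet
  have hCinv : (C⁻¹)ᴴ = C⁻¹ := hC.isHermitian.inv
  -- key algebraic identities
  have key2 : B⁻¹ - C⁻¹ = C⁻¹ * P * B⁻¹ := by
    have hCB : C - B = P := by rw [hCdef]; abel
    calc B⁻¹ - C⁻¹ = C⁻¹ * C * B⁻¹ - C⁻¹ * (B * B⁻¹) := by
          rw [hCC', hBB', Matrix.one_mul, Matrix.mul_one]
      _ = C⁻¹ * (C - B) * B⁻¹ := by noncomm_ring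
      _ = C⁻¹ * P * B⁻¹ := by rw [hCB]
  have key1 : C⁻¹ * P * B⁻¹ = C⁻¹ * P * C⁻¹ + C⁻¹ * P * B⁻¹ * P * C⁻¹ := by
    calc C⁻¹ * P * B⁻¹ = C⁻¹ * P * B⁻¹ * (C * C⁻¹) := by rw [hCC, Matrix.mul_one]
      _ = C⁻¹ * P * (B⁻¹ * B) * C⁻¹ + C⁻¹ * P * B⁻¹ * P * C⁻¹ := by
          rw [hCdef]; noncomm_ring
      _ = C⁻¹ * P * C⁻¹ + C⁻¹ * P * B⁻¹ * P * C⁻¹ := by rw [hBB, Matrix.mul_one]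
  have t1 : (C⁻¹ * P * C⁻¹).PosSemidef := by
    have := hP.mul_mul_conjTranspose_same C⁻¹
    rwa [hCinv] at this
  have t2 : (C⁻¹ * P * B⁻¹ * P * C⁻¹).PosSemidef := by
    have := (hB.inv.posSemidef).mul_mul_conjTranspose_same (C⁻¹ * P)
    rwa [conjTranspose_mul, hP.1, hCinv, ← Matrix.mul_assoc] at this
  have := t1.add t2
  rwa [← key1, ← key2] at this

set_option maxHeartbeats 1000000 in
/-- One-sided bound. -/
lemma one_sided (H Hk : Matrix (Fin p) (Fin p) ℝ)
    (hH : H.PosSemidef) (hHk : Hk.PosSemidef) {ρ e : ℝ} (hρ : 0 < ρ) (he : 0 ≤ e)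
    (hE : (e • (1 : Matrix (Fin p) (Fin p) ℝ) + (H - Hk)).PosSemidef) :
    ((e / (ρ * (ρ + e))) • (1 : Matrix (Fin p) (Fin p) ℝ)
      - ((H + ρ • 1)⁻¹ - (Hk + ρ • 1)⁻¹)).PosSemidef := by
  set A := H + ρ • (1 : Matrix (Fin p) (Fin p) ℝ) with hAdef
  set B := Hk + ρ • (1 : Matrix (Fin p) (Fin p) ℝ) with hBdef
  have hA : A.PosDef := Matrix.PosDef.posSemidef_add hH (posDef_smul_one hρ)
  have hB : B.PosDef := Matrix.PosDef.posSemidef_add hHk (posDef_smul_one hρ)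
  have hρe : 0 < ρ * (ρ + e) := mul_pos hρ (by linarith)
  -- step 1 : B⁻¹ - (A + e•1)⁻¹ is PSD
  have step1 : (B⁻¹ - (A + e • 1)⁻¹).PosSemidef := by
    have heq : A + e • (1 : Matrix (Fin p) (Fin p) ℝ)
        = B + (e • 1 + (H - Hk)) := by
      rw [hAdef, hBdef]; abel
    rw [heq]
    exact inv_antitone hB hE
  -- step 2 : A⁻¹ - (A + e•1)⁻¹ = e • (A * (A + e•1))⁻¹
  have hAdet : IsUnit A.det := (Matrix.isUnit_iff_isUnit_det A).mp hA.isUnit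
  have hAe : (A + e • (1 : Matrix (Fin p) (Fin p) ℝ)).PosDef :=
    hA.add_posSemidef (psd_smul Matrix.PosSemidef.one he)
  have hAedet : IsUnit (A + e • (1 : Matrix (Fin p) (Fin p) ℝ)).det :=
    (Matrix.isUnit_iff_isUnit_det _).mp hAe.isUnit
  set Ae := A + e • (1 : Matrix (Fin p) (Fin p) ℝ) with hAedef
  have hAA : A * A⁻¹ = 1 := Matrix.mul_nonsing_inv A hAdet
  have hAA' : A⁻¹ * A = 1 := Matrix.nonsing_inv_mul A hAdet
  have hAeAe : Ae * Ae⁻¹ = 1 := Matrix.mul_nonsing_inv Ae hAedet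
  have hAeAe' : Ae⁻¹ * Ae = 1 := Matrix.nonsing_inv_mul Ae hAedet
  have step2 : A⁻¹ - Ae⁻¹ = e • (Ae⁻¹ * A⁻¹) := by
    calc A⁻¹ - Ae⁻¹ = Ae⁻¹ * Ae * A⁻¹ - Ae⁻¹ * (A * A⁻¹) := by
          rw [hAeAe', hAA, Matrix.one_mul, Matrix.mul_one]
      _ = Ae⁻¹ * (Ae - A) * A⁻¹ := by noncomm_ring
      _ = Ae⁻¹ * (e • 1) * A⁻¹ := by rw [hAedef]; congr 1; congr 1; abel
      _ = e • (Ae⁻¹ * A⁻¹) := by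
          rw [Matrix.mul_smul, Matrix.mul_one, Matrix.smul_mul]
  -- step 3 : A * Ae = (ρ(ρ+e)) • 1 + PSD
  have hP0 : (H * H + (2 * ρ + e) • H).PosSemidef := by
    have h1 : (H * H).PosSemidef := by
      have := Matrix.posSemidef_conjTranspose_mul_self H
      rwa [hH.1] at this
    exact h1.add (psd_smul hH (by linarith))
  have step3 : A * Ae = (ρ * (ρ + e)) • (1 : Matrix (Fin p) (Fin p) ℝ)
      + (H * H + (2 * ρ + e) • H) := by
    rw [hAedef, hAdef]
    simp only [Matrix.add_mul, Matrix.mul_add, Matrix.smul_mul, Matrix.mul_smul,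
      Matrix.one_mul, Matrix.mul_one, smul_smul]
    module
  -- step 4 : (ρ(ρ+e))⁻¹ • 1 - (A * Ae)⁻¹ is PSD
  have hsmul_inv : ((ρ * (ρ + e)) • (1 : Matrix (Fin p) (Fin p) ℝ))⁻¹
      = (ρ * (ρ + e))⁻¹ • 1 := by
    apply Matrix.inv_eq_right_inv
    rw [Matrix.smul_mul, Matrix.mul_smul, Matrix.one_mul, smul_smul,
      mul_inv_cancel₀ hρe.ne', one_smul]
  have step4 : ((ρ * (ρ + e))⁻¹ • (1 : Matrix (Fin p) (Fin p) ℝ) - (A * Ae)⁻¹).PosSemidef := by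
    have := inv_antitone (posDef_smul_one hρe (p := p)) hP0
    rwa [← step3, hsmul_inv] at this
  -- step 5 : scale by e
  have hmulinv : (A * Ae)⁻¹ = Ae⁻¹ * A⁻¹ := Matrix.mul_inv_rev A Ae
  have step5 : ((e / (ρ * (ρ + e))) • (1 : Matrix (Fin p) (Fin p) ℝ)
      - (A⁻¹ - Ae⁻¹)).PosSemidef := by
    have hthis := psd_smul step4 he
    rw [smul_sub, smul_smul] at hthis
    rw [step2, ← hmulinv, div_eq_mul_inv]
    exact hthis
  -- combine
  have final : (e / (ρ * (ρ + e))) • (1 : Matrix (Fin p) (Fin p) ℝ) - (A⁻¹ - B⁻¹)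
      = ((e / (ρ * (ρ + e))) • (1 : Matrix (Fin p) (Fin p) ℝ) - (A⁻¹ - Ae⁻¹))
        + (B⁻¹ - Ae⁻¹) := by abel
  rw [final]
  exact step5.add step1

/-- Norm bound from two-sided PSD bounds for a hermitian matrix. -/
lemma norm_le_of_psd {M : Matrix (Fin p) (Fin p) ℝ} (hM : M.IsHermitian) {c : ℝ} (hc : 0 ≤ c)
    (h₁ : (c • (1 : Matrix (Fin p) (Fin p) ℝ) - M).PosSemidef)
    (h₂ : (c • (1 : Matrix (Fin p) (Fin p) ℝ) + M).PosSemidef) : ‖M‖ ≤ c := by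
  have hq₁ : ∀ x : Fin p → ℝ, x ⬝ᵥ M *ᵥ x ≤ c * (x ⬝ᵥ x) := by
    intro x
    have := h₁.dotProduct_mulVec_nonneg x
    rw [star_trivial, sub_mulVec, dotProduct_sub, smul_mulVec, one_mulVec,
      dotProduct_smul, smul_eq_mul] at this
    linarith
  have hq₂ : ∀ x : Fin p → ℝ, -(c * (x ⬝ᵥ x)) ≤ x ⬝ᵥ M *ᵥ x := by
    intro x
    have := h₂.dotProduct_mulVec_nonneg x
    rw [star_trivial, add_mulVec, dotProduct_add, smul_mulVec, one_mulVec,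
      dotProduct_smul, smul_eq_mul] at this
    linarith
  have hMT : Mᵀ = M := by
    ext i j
    rw [Matrix.transpose_apply, ← hM.apply i j, star_trivial]
  have hsymm : ∀ u v : Fin p → ℝ, u ⬝ᵥ M *ᵥ v = v ⬝ᵥ M *ᵥ u := by
    intro u v
    rw [Matrix.dotProduct_mulVec, ← Matrix.mulVec_transpose, hMT, dotProduct_comm]
  have hbil : ∀ u v : Fin p → ℝ, 2 * (u ⬝ᵥ M *ᵥ v) ≤ c * (u ⬝ᵥ u) + c * (v ⬝ᵥ v) := by
    intro u v
    have e1 := hq₁ (u + v)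
    have e2 := hq₂ (u - v)
    simp only [Matrix.mulVec_add, Matrix.mulVec_sub, dotProduct_add, dotProduct_sub,
      add_dotProduct, sub_dotProduct] at e1 e2
    have hs := hsymm u v
    have hd : u ⬝ᵥ v = v ⬝ᵥ u := dotProduct_comm u v
    nlinarith [e1, e2]
  have hpt : ∀ x : Fin p → ℝ, (M *ᵥ x) ⬝ᵥ (M *ᵥ x) ≤ c ^ 2 * (x ⬝ᵥ x) := by
    intro x
    set y := M *ᵥ x with hy
    set s := y ⬝ᵥ y with hs
    set n := x ⬝ᵥ x with hn
    have hs0 : 0 ≤ s := dot_self_nonneg y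
    have hn0 : 0 ≤ n := dot_self_nonneg x
    have hxy : x ⬝ᵥ M *ᵥ y = s := by rw [hsymm x y, ← hy]
    have h2s : 2 * s ≤ c * n + c * s := by
      have := hbil x y; rwa [hxy] at this
    by_cases hx : x = 0
    · have hyz : y = 0 := by rw [hy, hx, Matrix.mulVec_zero]
      have hsz : s = 0 := by rw [hs, hyz, zero_dotProduct]
      rw [hsz]
      exact mul_nonneg (sq_nonneg c) hn0
    · have hnpos : 0 < n := by
        rcases lt_or_eq_of_le hn0 with h | h
        · exact h
        · exact absurd (dotProduct_self_eq_zero.mp h.symm) hx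
      rcases lt_or_eq_of_le hs0 with hspos | hszero
      · have hcpos : 0 < c := by nlinarith
        have hkey := hbil (s • x) ((c * n) • y)
        simp only [Matrix.mulVec_smul, dotProduct_smul, smul_dotProduct, smul_eq_mul] at hkey
        rw [hxy] at hkey
        -- hkey : 2 * (s * ((c*n) * s)) ≤ c * (s * (s * n)) + c * ((c*n) * ((c*n) * s))
        nlinarith [mul_pos (mul_pos hcpos hnpos) hspos]
      · rw [← hszero]
        exact mul_nonneg (sq_nonneg c) hn0
  rw [Matrix.l2_opNorm_def]
  refine ContinuousLinearMap.opNorm_le_bound _ hc fun x => ?_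
  show ‖Matrix.toEuclideanLin M x‖ ≤ c * ‖x‖
  set x₀ : Fin p → ℝ := (WithLp.equiv 2 (Fin p → ℝ)) x with hx₀
  have hxe : x = (WithLp.equiv 2 (Fin p → ℝ)).symm x₀ := rfl
  have happ : Matrix.toEuclideanLin M x = (WithLp.equiv 2 (Fin p → ℝ)).symm (M *ᵥ x₀) := rfl
  have hnv : ‖Matrix.toEuclideanLin M x‖ ^ 2 = (M *ᵥ x₀) ⬝ᵥ (M *ᵥ x₀) := by
    rw [← real_inner_self_eq_norm_sq, happ, inner_toE]
  have hnx : ‖x‖ ^ 2 = x₀ ⬝ᵥ x₀ := by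
    rw [← real_inner_self_eq_norm_sq, hxe, inner_toE]
  have hsq : ‖Matrix.toEuclideanLin M x‖ ^ 2 ≤ (c * ‖x‖) ^ 2 := by
    rw [hnv, mul_pow, hnx]
    exact hpt x₀
  have h1 := Real.sqrt_le_sqrt hsq
  rwa [Real.sqrt_sq (norm_nonneg _), Real.sqrt_sq (by positivity)] at h1

end ResolventAux

/-- Bound on the operator-norm difference of the resolvents
(Proposition 3.1 of Frangella et al. 2021). -/
theorem resolvent_difference_bound {p : ℕ}
    (H Hk : Matrix (Fin p) (Fin p) ℝ)
    (hH : H.PosSemidef) (hHk : Hk.PosSemidef) (ρ : ℝ) (hρ : 0 < ρ) :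
    ‖(H + ρ • (1 : Matrix (Fin p) (Fin p) ℝ))⁻¹
        - (Hk + ρ • (1 : Matrix (Fin p) (Fin p) ℝ))⁻¹‖ ≤
      ρ⁻¹ * (‖H - Hk‖ / (‖H - Hk‖ + ρ)) ∧
    (H - Hk = 0 →
      (H + ρ • (1 : Matrix (Fin p) (Fin p) ℝ))⁻¹
        - (Hk + ρ • (1 : Matrix (Fin p) (Fin p) ℝ))⁻¹ = 0) := by
  constructor
  · set e := ‖H - Hk‖ with he
    have he0 : 0 ≤ e := norm_nonneg _
    have hEherm : (H - Hk).IsHermitian := hH.1.sub hHk.1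
    have hEp : (e • (1 : Matrix (Fin p) (Fin p) ℝ) + (H - Hk)).PosSemidef := by
      have := ResolventAux.psd_smul_one_sub hEherm.neg (c := e) (by rw [norm_neg])
      rwa [sub_neg_eq_add] at this
    have hEm : (e • (1 : Matrix (Fin p) (Fin p) ℝ) + (Hk - H)).PosSemidef := by
      have := ResolventAux.psd_smul_one_sub hEherm (c := e) le_rfl
      rwa [← neg_sub Hk H, sub_neg_eq_add] at this
    have hEm2 : (‖Hk - H‖ • (1 : Matrix (Fin p) (Fin p) ℝ) + (Hk - H)).PosSemidef := by
      rwa [norm_sub_rev]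
    have h₁ := ResolventAux.one_sided H Hk hH hHk hρ he0 hEp
    have h₂ := ResolventAux.one_sided Hk H hHk hH hρ (norm_nonneg _) hEm2
    rw [norm_sub_rev Hk H, ← he] at h₂
    have hA : (H + ρ • (1 : Matrix (Fin p) (Fin p) ℝ)).PosDef :=
      Matrix.PosDef.posSemidef_add hH (ResolventAux.posDef_smul_one hρ)
    have hB : (Hk + ρ • (1 : Matrix (Fin p) (Fin p) ℝ)).PosDef :=
      Matrix.PosDef.posSemidef_add hHk (ResolventAux.posDef_smul_one hρ)
    have hDherm : ((H + ρ • (1 : Matrix (Fin p) (Fin p) ℝ))⁻¹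
        - (Hk + ρ • (1 : Matrix (Fin p) (Fin p) ℝ))⁻¹).IsHermitian :=
      hA.isHermitian.inv.sub hB.isHermitian.inv
    have hc0 : 0 ≤ e / (ρ * (ρ + e)) := by positivity
    have h₂' : ((e / (ρ * (ρ + e))) • (1 : Matrix (Fin p) (Fin p) ℝ)
        + ((H + ρ • 1)⁻¹ - (Hk + ρ • 1)⁻¹)).PosSemidef := by
      rw [show (e / (ρ * (ρ + e))) • (1 : Matrix (Fin p) (Fin p) ℝ)
          + ((H + ρ • 1)⁻¹ - (Hk + ρ • 1)⁻¹)
          = (e / (ρ * (ρ + e))) • (1 : Matrix (Fin p) (Fin p) ℝ)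
            - ((Hk + ρ • 1)⁻¹ - (H + ρ • 1)⁻¹) from by abel]
      exact h₂
    have hfinal := ResolventAux.norm_le_of_psd hDherm hc0 h₁ h₂'
    calc ‖(H + ρ • (1 : Matrix (Fin p) (Fin p) ℝ))⁻¹
          - (Hk + ρ • (1 : Matrix (Fin p) (Fin p) ℝ))⁻¹‖
        ≤ e / (ρ * (ρ + e)) := hfinal
      _ = ρ⁻¹ * (e / (e + ρ)) := by
          rw [div_eq_mul_inv, mul_inv, div_eq_mul_inv]
          ring_nf
  · intro h
    have : H = Hk := sub_eq_zero.mp h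
    rw [this, sub_self]
end

section
/- Theorem 1 (hypergradient error bound): Let H, H_k be symmetric positive semidefinite p×p real matrices, ρ > 0, g ∈ ℝᵖ a row vector, F a p×h real matrix, and c ∈ ℝʰ. Define h⋆ = -gᵀ(H+ρI)⁻¹F + cᵀ and h = -gᵀ(H_k+ρI)⁻¹F + cᵀ. Then ‖h⋆ - h‖₂ ≤ ‖g‖₂ · ‖F‖_op · (1/ρ)·‖H - H_k‖_op/(ρ + ‖H - H_k‖_op). -/
open Matrix
open scoped Matrix.Norms.L2Operator

set_option linter.unusedSectionVars false
set_option maxHeartbeats 800000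

noncomputable section HGBAux

variable {n : Type*} [Fintype n] [DecidableEq n]

def hgbEv (v : n → ℝ) : EuclideanSpace ℝ n := (WithLp.equiv 2 (n → ℝ)).symm v

lemma hgb_inner_eq (v w : n → ℝ) :
    (inner ℝ (hgbEv v) (hgbEv w) : ℝ) = v ⬝ᵥ w := by
  simp [hgbEv, PiLp.inner_apply, dotProduct, RCLike.inner_apply, mul_comm]

lemma hgb_normsq (v : n → ℝ) : v ⬝ᵥ v = ‖hgbEv v‖ ^ 2 := by
  rw [← hgb_inner_eq]; exact real_inner_self_eq_norm_sq _

lemma hgb_dot_le (v w : n → ℝ) : v ⬝ᵥ w ≤ ‖hgbEv v‖ * ‖hgbEv w‖ := by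
  rw [← hgb_inner_eq]; exact real_inner_le_norm _ _

lemma hgb_mulVec_norm (M : Matrix n n ℝ) (v : n → ℝ) :
    ‖hgbEv (M *ᵥ v)‖ ≤ ‖M‖ * ‖hgbEv v‖ :=
  M.l2_opNorm_mulVec (hgbEv v)

lemma hgb_quad (M : Matrix n n ℝ) (v : n → ℝ) :
    v ⬝ᵥ (M *ᵥ v) ≤ ‖M‖ * ‖hgbEv v‖ ^ 2 :=
  calc v ⬝ᵥ (M *ᵥ v) ≤ ‖hgbEv v‖ * ‖hgbEv (M *ᵥ v)‖ := hgb_dot_le _ _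
    _ ≤ ‖hgbEv v‖ * (‖M‖ * ‖hgbEv v‖) :=
        mul_le_mul_of_nonneg_left (hgb_mulVec_norm M v) (norm_nonneg _)
    _ = ‖M‖ * ‖hgbEv v‖ ^ 2 := by ring

lemma hgb_psd_nonneg {M : Matrix n n ℝ} (hM : M.PosSemidef) (v : n → ℝ) :
    0 ≤ v ⬝ᵥ (M *ᵥ v) := by simpa using hM.dotProduct_mulVec_nonneg v

lemma hgb_symm_dot {M : Matrix n n ℝ} (hM : Mᵀ = M) (v w : n → ℝ) :
    (M *ᵥ v) ⬝ᵥ w = v ⬝ᵥ (M *ᵥ w) := by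
  rw [Matrix.dotProduct_mulVec v M w, ← hM, Matrix.mulVec_transpose, hM,
    dotProduct_comm]

lemma hgb_smul_one_posDef {ρ : ℝ} (hρ : 0 < ρ) :
    (ρ • (1 : Matrix n n ℝ)).PosDef := by
  rw [Matrix.smul_one_eq_diagonal]
  exact Matrix.PosDef.diagonal fun _ => hρ

lemma hgb_transpose_of_posSemidef {M : Matrix n n ℝ} (hM : M.PosSemidef) : Mᵀ = M :=
  hM.isHermitian

/-- Core quadratic-form estimate. -/
lemma hgb_core (H Hk : Matrix n n ℝ) (hH : H.PosSemidef) (hHk : Hk.PosSemidef)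
    (ρ : ℝ) (hρ : 0 < ρ) (z : n → ℝ) :
    z ⬝ᵥ (((H + ρ • (1 : Matrix n n ℝ))⁻¹ - (Hk + ρ • (1 : Matrix n n ℝ))⁻¹) *ᵥ z)
      ≤ ρ⁻¹ * (‖H - Hk‖ / (ρ + ‖H - Hk‖)) * ‖hgbEv z‖ ^ 2 := by
  set A := H + ρ • (1 : Matrix n n ℝ) with hAdef
  set B := Hk + ρ • (1 : Matrix n n ℝ) with hBdef
  set t := ‖H - Hk‖ with ht
  have hA : A.PosDef := Matrix.PosDef.posSemidef_add hH (hgb_smul_one_posDef hρ)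
  have hB : B.PosDef := Matrix.PosDef.posSemidef_add hHk (hgb_smul_one_posDef hρ)
  have hAs : Aᵀ = A := hgb_transpose_of_posSemidef hA.posSemidef
  have hBs : Bᵀ = B := hgb_transpose_of_posSemidef hB.posSemidef
  have hAdet : IsUnit A.det := isUnit_iff_ne_zero.mpr hA.det_pos.ne'
  have hBdet : IsUnit B.det := isUnit_iff_ne_zero.mpr hB.det_pos.ne'
  have ht0 : (0:ℝ) ≤ t := norm_nonneg _
  have hρt : (0:ℝ) < ρ + t := by linarith
  set c : ℝ := ρ / (ρ + t) with hc
  set u : n → ℝ := A⁻¹ *ᵥ z with hu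
  have hAu : A *ᵥ u = z := by
    rw [hu, Matrix.mulVec_mulVec, Matrix.mul_nonsing_inv _ hAdet, Matrix.one_mulVec]
  set r := ‖hgbEv z‖ with hr
  set s := ‖hgbEv u‖ with hs
  -- ρ s^2 ≤ z ⬝ᵥ u
  have hHu : (0:ℝ) ≤ u ⬝ᵥ (H *ᵥ u) := hgb_psd_nonneg hH u
  have hAuu : u ⬝ᵥ (A *ᵥ u) = z ⬝ᵥ u := by rw [hAu, dotProduct_comm]
  have hAqq : u ⬝ᵥ (A *ᵥ u) = u ⬝ᵥ (H *ᵥ u) + ρ * (u ⬝ᵥ u) := by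
    rw [hAdef, Matrix.add_mulVec, dotProduct_add, Matrix.smul_mulVec,
      Matrix.one_mulVec, dotProduct_smul, smul_eq_mul]
  have hus : ρ * s ^ 2 ≤ z ⬝ᵥ u := by
    rw [← hAuu, hAqq, hs, ← hgb_normsq]; linarith
  have hzu : z ⬝ᵥ u ≤ r * s := hgb_dot_le z u
  -- u ⬝ᵥ B u ≤ z ⬝ᵥ u + t s^2
  have hBA : B = A + (Hk - H) := by rw [hAdef, hBdef]; abel
  have hE : u ⬝ᵥ ((Hk - H) *ᵥ u) ≤ t * s ^ 2 := by
    calc u ⬝ᵥ ((Hk - H) *ᵥ u) ≤ ‖Hk - H‖ * ‖hgbEv u‖ ^ 2 := hgb_quad _ u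
      _ = t * s ^ 2 := by rw [norm_sub_rev]
  have hBu : u ⬝ᵥ (B *ᵥ u) ≤ z ⬝ᵥ u + t * s ^ 2 := by
    have : u ⬝ᵥ (B *ᵥ u) = u ⬝ᵥ (A *ᵥ u) + u ⬝ᵥ ((Hk - H) *ᵥ u) := by
      rw [hBA, Matrix.add_mulVec, dotProduct_add]
    rw [this, hAuu]; linarith
  -- PSD trick: 0 ≤ w ⬝ᵥ B⁻¹ w
  set w : n → ℝ := z - B *ᵥ (c • u) with hw
  have hw0 : (0:ℝ) ≤ w ⬝ᵥ (B⁻¹ *ᵥ w) := hgb_psd_nonneg hB.inv.posSemidef w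
  have hBinvs : (B⁻¹)ᵀ = B⁻¹ := by rw [Matrix.transpose_nonsing_inv, hBs]
  have hBBi : B⁻¹ *ᵥ (B *ᵥ (c • u)) = c • u := by
    rw [Matrix.mulVec_mulVec, Matrix.nonsing_inv_mul _ hBdet, Matrix.one_mulVec]
  have hexp : w ⬝ᵥ (B⁻¹ *ᵥ w)
      = z ⬝ᵥ (B⁻¹ *ᵥ z) - 2 * c * (z ⬝ᵥ u) + c ^ 2 * (u ⬝ᵥ (B *ᵥ u)) := by
    have h1 : B⁻¹ *ᵥ w = B⁻¹ *ᵥ z - c • u := by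
      rw [hw, Matrix.mulVec_sub, hBBi]
    rw [h1, hw]
    have h2 : (B *ᵥ (c • u)) ⬝ᵥ (B⁻¹ *ᵥ z) = c * (z ⬝ᵥ u) := by
      rw [hgb_symm_dot hBs, Matrix.mulVec_mulVec, Matrix.mul_nonsing_inv _ hBdet,
        Matrix.one_mulVec, smul_dotProduct, smul_eq_mul, dotProduct_comm]
    have h3 : (B *ᵥ (c • u)) ⬝ᵥ (c • u) = c ^ 2 * (u ⬝ᵥ (B *ᵥ u)) := by
      rw [hgb_symm_dot hBs, smul_dotProduct, Matrix.mulVec_smul,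
        dotProduct_smul]
      simp [smul_eq_mul]; ring
    have h4 : z ⬝ᵥ (c • u) = c * (z ⬝ᵥ u) := by
      rw [dotProduct_smul, smul_eq_mul]
    rw [sub_dotProduct, dotProduct_sub, dotProduct_sub,
      h2, h3, h4]
    ring
  -- assemble
  have hgoal : z ⬝ᵥ ((A⁻¹ - B⁻¹) *ᵥ z) = z ⬝ᵥ u - z ⬝ᵥ (B⁻¹ *ᵥ z) := by
    rw [Matrix.sub_mulVec, dotProduct_sub, hu]
  rw [hgoal]
  have hc2 : (0:ℝ) ≤ c ^ 2 := sq_nonneg c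
  have step1 : z ⬝ᵥ u - z ⬝ᵥ (B⁻¹ *ᵥ z)
      ≤ (1 - c) ^ 2 * (z ⬝ᵥ u) + c ^ 2 * (t * s ^ 2) := by nlinarith [hw0, hexp, hBu]
  have hrs0 : (0:ℝ) ≤ r := norm_nonneg _
  have hss0 : (0:ℝ) ≤ s := norm_nonneg _
  have hρs : ρ * s ≤ r := by
    rcases eq_or_lt_of_le hss0 with h0 | h0
    · rw [← h0]; simpa using hrs0
    · have := le_trans hus hzu
      nlinarith
  have hzu' : (1 - c) ^ 2 * (z ⬝ᵥ u) ≤ (1 - c) ^ 2 * (r * s) :=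
    mul_le_mul_of_nonneg_left hzu (sq_nonneg _)
  have hc1 : 1 - c = t / (ρ + t) := by rw [hc]; field_simp; ring
  have h6 : t^2*r*(ρ*s) ≤ t^2*r*r := mul_le_mul_of_nonneg_left hρs (by positivity)
  have h7 : (ρ*s)*(ρ*s) ≤ r*r := mul_self_le_mul_self (by positivity) hρs
  have h8 : (ρ*t)*((ρ*s)*(ρ*s)) ≤ (ρ*t)*(r*r) :=
    mul_le_mul_of_nonneg_left h7 (by positivity)
  have poly : ρ * t^2 * (r*s) + ρ^3 * t * s^2 ≤ t*(ρ+t)*r^2 := by nlinarith [h6, h8]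
  have key : (1 - c) ^ 2 * (r * s) + c ^ 2 * (t * s ^ 2)
      ≤ ρ⁻¹ * (t / (ρ + t)) * r ^ 2 := by
    rw [hc1, hc]
    have hdiff : ρ⁻¹ * (t / (ρ + t)) * r ^ 2
        - ((t / (ρ + t)) ^ 2 * (r * s) + (ρ / (ρ + t)) ^ 2 * (t * s ^ 2))
        = (t*(ρ+t)*r^2 - (ρ * t^2 * (r*s) + ρ^3 * t * s^2)) / (ρ * (ρ + t)^2) := by
      field_simp
    have hnn : (0:ℝ) ≤ (t*(ρ+t)*r^2 - (ρ * t^2 * (r*s) + ρ^3 * t * s^2)) / (ρ * (ρ + t)^2) :=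
      div_nonneg (by linarith) (by positivity)
    linarith [hdiff ▸ hnn]
  calc z ⬝ᵥ u - z ⬝ᵥ (B⁻¹ *ᵥ z)
      ≤ (1 - c) ^ 2 * (z ⬝ᵥ u) + c ^ 2 * (t * s ^ 2) := step1
    _ ≤ (1 - c) ^ 2 * (r * s) + c ^ 2 * (t * s ^ 2) := by linarith
    _ ≤ ρ⁻¹ * (t / (ρ + t)) * r ^ 2 := key


/-- Polarization: bound on quadratic form + symmetry gives operator norm bound. -/
lemma hgb_opNorm_le (D : Matrix n n ℝ) (hD : Dᵀ = D) (lam : ℝ) (hlam : 0 ≤ lam)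
    (h : ∀ z : n → ℝ, |z ⬝ᵥ (D *ᵥ z)| ≤ lam * ‖hgbEv z‖ ^ 2) : ‖D‖ ≤ lam := by
  have hadd : ∀ a b : n → ℝ, hgbEv (a + b) = hgbEv a + hgbEv b := fun a b => rfl
  have hsub : ∀ a b : n → ℝ, hgbEv (a - b) = hgbEv a - hgbEv b := fun a b => rfl
  have hmv : ∀ v : n → ℝ, ‖hgbEv (D *ᵥ v)‖ ≤ lam * ‖hgbEv v‖ := by
    intro v
    set y : n → ℝ := D *ᵥ v with hy
    rcases eq_or_lt_of_le (norm_nonneg (hgbEv y)) with h0 | h0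
    · rw [← h0]; positivity
    rcases eq_or_lt_of_le (norm_nonneg (hgbEv v)) with h1 | h1
    · exfalso
      have hv0 : hgbEv v = 0 := by rw [← norm_eq_zero]; exact h1.symm
      have hvz : v = 0 := (WithLp.equiv 2 (n → ℝ)).symm.injective hv0
      have : y = 0 := by rw [hy, hvz, Matrix.mulVec_zero]
      rw [this] at h0
      simp only [hgbEv] at h0
      rw [show ((WithLp.equiv 2 (n → ℝ)).symm (0 : n → ℝ)) = 0 from rfl, norm_zero] at h0
      exact lt_irrefl 0 h0
    set sc : ℝ := ‖hgbEv v‖ / ‖hgbEv y‖ with hsc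
    have hsc0 : 0 ≤ sc := by positivity
    set x : n → ℝ := sc • y with hx
    have hsym : v ⬝ᵥ (D *ᵥ x) = x ⬝ᵥ (D *ᵥ v) := by
      rw [← hgb_symm_dot hD, dotProduct_comm]
    have hpol : 4 * (x ⬝ᵥ (D *ᵥ v)) =
        (x + v) ⬝ᵥ (D *ᵥ (x + v)) - (x - v) ⬝ᵥ (D *ᵥ (x - v)) := by
      rw [Matrix.mulVec_add, Matrix.mulVec_sub,
        add_dotProduct, sub_dotProduct,
        dotProduct_add, dotProduct_add,
        dotProduct_sub, dotProduct_sub]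
      linarith [hsym]
    have hpar : ‖hgbEv (x + v)‖ ^ 2 + ‖hgbEv (x - v)‖ ^ 2
        = 2 * (‖hgbEv x‖ ^ 2 + ‖hgbEv v‖ ^ 2) := by
      rw [hadd, hsub, norm_add_sq_real, norm_sub_sq_real]
      ring
    have hb1 : (x + v) ⬝ᵥ (D *ᵥ (x + v)) ≤ lam * ‖hgbEv (x + v)‖ ^ 2 :=
      (abs_le.mp (h (x + v))).2
    have hb2 : -(lam * ‖hgbEv (x - v)‖ ^ 2) ≤ (x - v) ⬝ᵥ (D *ᵥ (x - v)) :=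
      (abs_le.mp (h (x - v))).1
    have hxdot : x ⬝ᵥ (D *ᵥ v) = sc * ‖hgbEv y‖ ^ 2 := by
      rw [hx, smul_dotProduct, smul_eq_mul, ← hy, hgb_normsq]
    have hxnorm : ‖hgbEv x‖ = ‖hgbEv v‖ := by
      have : hgbEv x = sc • hgbEv y := rfl
      rw [this, norm_smul, Real.norm_eq_abs, abs_of_nonneg hsc0, hsc,
        div_mul_cancel₀ _ h0.ne']
    have hkey : 4 * (sc * ‖hgbEv y‖ ^ 2) ≤ 4 * (lam * ‖hgbEv v‖ ^ 2) := by
      rw [← hxdot, hpol]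
      calc (x + v) ⬝ᵥ (D *ᵥ (x + v)) - (x - v) ⬝ᵥ (D *ᵥ (x - v))
          ≤ lam * ‖hgbEv (x + v)‖ ^ 2 + lam * ‖hgbEv (x - v)‖ ^ 2 := by
            linarith
        _ = lam * (‖hgbEv (x + v)‖ ^ 2 + ‖hgbEv (x - v)‖ ^ 2) := by ring
        _ = lam * (2 * (‖hgbEv x‖ ^ 2 + ‖hgbEv v‖ ^ 2)) := by rw [hpar]
        _ = 4 * (lam * ‖hgbEv v‖ ^ 2) := by rw [hxnorm]; ring
    have hsy : sc * ‖hgbEv y‖ ^ 2 = ‖hgbEv v‖ * ‖hgbEv y‖ := by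
      rw [hsc]; field_simp
    rw [hsy] at hkey
    have : ‖hgbEv v‖ * ‖hgbEv y‖ ≤ ‖hgbEv v‖ * (lam * ‖hgbEv v‖) := by nlinarith
    exact le_of_mul_le_mul_left (by linarith) h1
  rw [Matrix.l2_opNorm_def]
  refine ContinuousLinearMap.opNorm_le_bound _ hlam fun x => ?_
  have h1 : (Matrix.toEuclideanLin (𝕜 := ℝ) (m := n) (n := n)).trans
      LinearMap.toContinuousLinearMap D x
      = hgbEv (D *ᵥ (WithLp.equiv 2 (n → ℝ)) x) := rfl
  have h2 : ‖x‖ = ‖hgbEv ((WithLp.equiv 2 (n → ℝ)) x)‖ := by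
    simp [hgbEv]
  rw [h1, h2]
  exact hmv _

/-- The resolvent difference bound. -/
lemma hgb_resolvent_bound (H Hk : Matrix n n ℝ) (hH : H.PosSemidef) (hHk : Hk.PosSemidef)
    (ρ : ℝ) (hρ : 0 < ρ) :
    ‖(Hk + ρ • (1 : Matrix n n ℝ))⁻¹ - (H + ρ • (1 : Matrix n n ℝ))⁻¹‖
      ≤ ρ⁻¹ * (‖H - Hk‖ / (ρ + ‖H - Hk‖)) := by
  set A := H + ρ • (1 : Matrix n n ℝ) with hAdef
  set B := Hk + ρ • (1 : Matrix n n ℝ) with hBdef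
  have hA : A.PosDef := Matrix.PosDef.posSemidef_add hH (hgb_smul_one_posDef hρ)
  have hB : B.PosDef := Matrix.PosDef.posSemidef_add hHk (hgb_smul_one_posDef hρ)
  have hAs : Aᵀ = A := hgb_transpose_of_posSemidef hA.posSemidef
  have hBs : Bᵀ = B := hgb_transpose_of_posSemidef hB.posSemidef
  have ht0 : (0:ℝ) ≤ ‖H - Hk‖ := norm_nonneg _
  have hDsym : (B⁻¹ - A⁻¹)ᵀ = B⁻¹ - A⁻¹ := by
    rw [Matrix.transpose_sub, Matrix.transpose_nonsing_inv, Matrix.transpose_nonsing_inv,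
      hAs, hBs]
  refine hgb_opNorm_le _ hDsym _ (by positivity) fun z => ?_
  rw [abs_le]
  have hflip : z ⬝ᵥ ((B⁻¹ - A⁻¹) *ᵥ z) = -(z ⬝ᵥ ((A⁻¹ - B⁻¹) *ᵥ z)) := by
    rw [Matrix.sub_mulVec, Matrix.sub_mulVec, dotProduct_sub, dotProduct_sub]
    ring
  constructor
  · have := hgb_core H Hk hH hHk ρ hρ z
    rw [hflip]
    linarith
  · have := hgb_core Hk H hHk hH ρ hρ z
    rw [norm_sub_rev] at this
    exact this

end HGBAux

/-- Theorem 1: hypergradient error bound. Row vectors are represented as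
`1 × n` matrices, on which the L2 operator norm coincides with the Euclidean
norm. -/
theorem hypergradient_error_bound {p h : ℕ}
    (H Hk : Matrix (Fin p) (Fin p) ℝ)
    (hH : H.PosSemidef) (hHk : Hk.PosSemidef) (ρ : ℝ) (hρ : 0 < ρ)
    (g : Matrix (Fin 1) (Fin p) ℝ) (F : Matrix (Fin p) (Fin h) ℝ)
    (c : Matrix (Fin 1) (Fin h) ℝ) :
    ‖(-(g * (H + ρ • (1 : Matrix (Fin p) (Fin p) ℝ))⁻¹ * F) + c)
        - (-(g * (Hk + ρ • (1 : Matrix (Fin p) (Fin p) ℝ))⁻¹ * F) + c)‖ ≤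
      ‖g‖ * ‖F‖ * (ρ⁻¹ * (‖H - Hk‖ / (ρ + ‖H - Hk‖))) := by
  set A := H + ρ • (1 : Matrix (Fin p) (Fin p) ℝ) with hAdef
  set B := Hk + ρ • (1 : Matrix (Fin p) (Fin p) ℝ) with hBdef
  have hres := hgb_resolvent_bound H Hk hH hHk ρ hρ
  have hEq : (-(g * A⁻¹ * F) + c) - (-(g * B⁻¹ * F) + c) = g * (B⁻¹ - A⁻¹) * F := by
    rw [Matrix.mul_sub, Matrix.sub_mul]
    abel
  rw [hEq]
  have h1 : ‖g * (B⁻¹ - A⁻¹) * F‖ ≤ ‖g * (B⁻¹ - A⁻¹)‖ * ‖F‖ := Matrix.l2_opNorm_mul _ _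
  have h2 : ‖g * (B⁻¹ - A⁻¹)‖ ≤ ‖g‖ * ‖B⁻¹ - A⁻¹‖ := Matrix.l2_opNorm_mul _ _
  calc ‖g * (B⁻¹ - A⁻¹) * F‖ ≤ ‖g * (B⁻¹ - A⁻¹)‖ * ‖F‖ := h1
    _ ≤ ‖g‖ * ‖B⁻¹ - A⁻¹‖ * ‖F‖ := mul_le_mul_of_nonneg_right h2 (norm_nonneg _)
    _ ≤ ‖g‖ * (ρ⁻¹ * (‖H - Hk‖ / (ρ + ‖H - Hk‖))) * ‖F‖ :=
        mul_le_mul_of_nonneg_right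
          (mul_le_mul_of_nonneg_left hres (norm_nonneg g)) (norm_nonneg F)
    _ = ‖g‖ * ‖F‖ * (ρ⁻¹ * (‖H - Hk‖ / (ρ + ‖H - Hk‖))) := by ring
end
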